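/- Let T be a closed densely defined operator in a Hilbert space such that ‖(T − λ)^{-1}‖ = 1/ε for all λ in some nonempty open subset U ⊂ ρ(T). Then the resolvent set ρ(T) is contained in Λ_{ess,ε}(T) ∩ (Λ_{ess,ε}(T*))*; more precisely, every λ for which T + K − λ is boundedly invertible for some compact operator K belongs to Λ_{ess,ε}(T) ∩ (Λ_{ess,ε}(T*))*. -/

import Mathlib

open Filter Topology

noncomputable section

variable {H₀ : Type} [NormedAddCommGroup H₀] [InnerProductSpace ℂ H₀] [CompleteSpace H₀]

/-- Weak convergence `x n ⇀ x₀` in the Hilbert space `H₀`. -/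
def WeakTendsto (x : ℕ → H₀) (x₀ : H₀) : Prop :=
  ∀ y : H₀, Tendsto (fun n => (inner ℂ (x n - x₀) y : ℂ)) atTop (nhds 0)

/-- `P` is the orthogonal projection of `H₀` onto the subspace `Hsp`. -/
def IsOrthProj (Hsp : Submodule ℂ H₀) (P : H₀ →L[ℂ] H₀) : Prop :=
  ∀ x : H₀, P x ∈ Hsp ∧ x - P x ∈ Hspᗮ

/-- The operator `T` with domain `dom` is densely defined in the subspace `Hsp` and maps its
domain into `Hsp`. -/
def ActsIn (Hsp dom : Submodule ℂ H₀) (T : H₀ →ₗ[ℂ] H₀) : Prop :=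
  dom ≤ Hsp ∧ dom.topologicalClosure = Hsp ∧ ∀ x ∈ dom, T x ∈ Hsp

/-- The operator `T` with domain `dom` is closed. -/
def IsClosedOp (dom : Submodule ℂ H₀) (T : H₀ →ₗ[ℂ] H₀) : Prop :=
  ∀ (x : ℕ → H₀) (u v : H₀), (∀ k, x k ∈ dom) →
    Tendsto x atTop (nhds u) → Tendsto (fun k => T (x k)) atTop (nhds v) →
    u ∈ dom ∧ T u = v

/-- `R` is the resolvent `(T - lam)⁻¹` of the operator `T` acting in `Hsp` with domain `dom`,
extended by `0` on the orthogonal complement of `Hsp`. -/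
def InResolvent (Hsp dom : Submodule ℂ H₀) (T : H₀ →ₗ[ℂ] H₀) (lam : ℂ)
    (R : H₀ →L[ℂ] H₀) : Prop :=
  (∀ y ∈ Hsp, R y ∈ dom ∧ T (R y) - lam • R y = y) ∧
  (∀ x ∈ dom, R (T x - lam • x) = x) ∧
  ∀ y ∈ Hspᗮ, R y = 0

/-- `lam` belongs to the resolvent set `ρ(T)`. -/
def InResolventSet (Hsp dom : Submodule ℂ H₀) (T : H₀ →ₗ[ℂ] H₀) (lam : ℂ) : Prop :=
  ∃ R : H₀ →L[ℂ] H₀, InResolvent Hsp dom T lam R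

/-- `lam` belongs to the limiting essential spectrum of the sequence `(Tₙ)`. -/
def LimEssSpectrum (domn : ℕ → Submodule ℂ H₀) (Tn : ℕ → H₀ →ₗ[ℂ] H₀) (lam : ℂ) : Prop :=
  ∃ (φ : ℕ → ℕ) (x : ℕ → H₀), StrictMono φ ∧ (∀ k, x k ∈ domn (φ k)) ∧
    (∀ k, ‖x k‖ = 1) ∧ WeakTendsto x 0 ∧
    Tendsto (fun k => ‖Tn (φ k) (x k) - lam • x k‖) atTop (nhds 0)

/-- `lam` belongs to the limiting essential `eps`-near spectrum of the sequence `(Tₙ)`. -/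
def LimEssNear (domn : ℕ → Submodule ℂ H₀) (Tn : ℕ → H₀ →ₗ[ℂ] H₀) (eps : ℝ) (lam : ℂ) :
    Prop :=
  ∃ (φ : ℕ → ℕ) (x : ℕ → H₀), StrictMono φ ∧ (∀ k, x k ∈ domn (φ k)) ∧
    (∀ k, ‖x k‖ = 1) ∧ WeakTendsto x 0 ∧
    Tendsto (fun k => ‖Tn (φ k) (x k) - lam • x k‖) atTop (nhds eps)

/-- `lam` belongs to the limiting approximate point spectrum of the sequence `(Tₙ)`. -/
def LimApproxSpectrum (domn : ℕ → Submodule ℂ H₀) (Tn : ℕ → H₀ →ₗ[ℂ] H₀) (lam : ℂ) : Prop :=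
  ∃ (φ : ℕ → ℕ) (x : ℕ → H₀), StrictMono φ ∧ (∀ k, x k ∈ domn (φ k)) ∧
    (∀ k, ‖x k‖ = 1) ∧
    Tendsto (fun k => ‖Tn (φ k) (x k) - lam • x k‖) atTop (nhds 0)

/-- `lam` belongs to the essential spectrum of `T`. -/
def EssSpectrum (dom : Submodule ℂ H₀) (T : H₀ →ₗ[ℂ] H₀) (lam : ℂ) : Prop :=
  ∃ x : ℕ → H₀, (∀ k, x k ∈ dom) ∧ (∀ k, ‖x k‖ = 1) ∧ WeakTendsto x 0 ∧
    Tendsto (fun k => ‖T (x k) - lam • x k‖) atTop (nhds 0)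

/-- `lam` belongs to the essential `eps`-near spectrum of `T`. -/
def EssNear (dom : Submodule ℂ H₀) (T : H₀ →ₗ[ℂ] H₀) (eps : ℝ) (lam : ℂ) : Prop :=
  ∃ x : ℕ → H₀, (∀ k, x k ∈ dom) ∧ (∀ k, ‖x k‖ = 1) ∧ WeakTendsto x 0 ∧
    Tendsto (fun k => ‖T (x k) - lam • x k‖) atTop (nhds eps)

/-- `lam` belongs to the approximate point spectrum of `T`. -/
def ApproxSpectrum (dom : Submodule ℂ H₀) (T : H₀ →ₗ[ℂ] H₀) (lam : ℂ) : Prop :=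
  ∃ x : ℕ → H₀, (∀ k, x k ∈ dom) ∧ (∀ k, ‖x k‖ = 1) ∧
    Tendsto (fun k => ‖T (x k) - lam • x k‖) atTop (nhds 0)

/-- `lam` belongs to the point spectrum of `T`. -/
def PointSpectrum (dom : Submodule ℂ H₀) (T : H₀ →ₗ[ℂ] H₀) (lam : ℂ) : Prop :=
  ∃ x ∈ dom, x ≠ 0 ∧ T x = lam • x

/-- `lam` belongs to the `eps`-approximate point spectrum of `T`. -/
def PseudoAppSpectrum (dom : Submodule ℂ H₀) (T : H₀ →ₗ[ℂ] H₀) (eps : ℝ) (lam : ℂ) : Prop :=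
  ∃ x ∈ dom, ‖x‖ = 1 ∧ ‖T x - lam • x‖ < eps

/-- `lam` belongs to the spectrum of `T` acting in `Hsp`. -/
def InSpec (Hsp dom : Submodule ℂ H₀) (T : H₀ →ₗ[ℂ] H₀) (lam : ℂ) : Prop :=
  ¬ InResolventSet Hsp dom T lam

/-- `lam` belongs to the `eps`-pseudospectrum of `T` acting in `Hsp`
(with the convention `‖(T-lam)⁻¹‖ = ∞` on the spectrum). -/
def InPseudoSpec (Hsp dom : Submodule ℂ H₀) (T : H₀ →ₗ[ℂ] H₀) (eps : ℝ) (lam : ℂ) : Prop :=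
  (¬ InResolventSet Hsp dom T lam) ∨
    ∃ R : H₀ →L[ℂ] H₀, InResolvent Hsp dom T lam R ∧ 1 / eps < ‖R‖

/-- Generalised strong resolvent convergence `Tₙ → T`. -/
def GSRConv (Hsp dom : Submodule ℂ H₀) (T : H₀ →ₗ[ℂ] H₀)
    (Hn domn : ℕ → Submodule ℂ H₀) (Tn : ℕ → H₀ →ₗ[ℂ] H₀) : Prop :=
  ∃ (n₀ : ℕ) (lam₀ : ℂ) (R : H₀ →L[ℂ] H₀) (Rn : ℕ → H₀ →L[ℂ] H₀),
    InResolvent Hsp dom T lam₀ R ∧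
    (∀ n, n ≥ n₀ → InResolvent (Hn n) (domn n) (Tn n) lam₀ (Rn n)) ∧
    ∀ y : H₀, Tendsto (fun n => Rn n y) atTop (nhds (R y))

/-- Generalised norm resolvent convergence `Tₙ → T`. -/
def GNRConv (Hsp dom : Submodule ℂ H₀) (T : H₀ →ₗ[ℂ] H₀)
    (Hn domn : ℕ → Submodule ℂ H₀) (Tn : ℕ → H₀ →ₗ[ℂ] H₀) : Prop :=
  ∃ (n₀ : ℕ) (lam₀ : ℂ) (R : H₀ →L[ℂ] H₀) (Rn : ℕ → H₀ →L[ℂ] H₀),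
    InResolvent Hsp dom T lam₀ R ∧
    (∀ n, n ≥ n₀ → InResolvent (Hn n) (domn n) (Tn n) lam₀ (Rn n)) ∧
    Tendsto (fun n => ‖Rn n - R‖) atTop (nhds 0)

/-- The sequence of bounded operators `(Bₙ)`, `Bₙ ∈ L(Hₙ)`, is discretely compact: images of
bounded sequences `xₙ ∈ Hₙ` have subsequences converging in norm to an element of `Hsp`. -/
def DiscretelyCompact (Hsp : Submodule ℂ H₀) (Hn : ℕ → Submodule ℂ H₀)
    (B : ℕ → H₀ →L[ℂ] H₀) : Prop :=
  ∀ (φ : ℕ → ℕ) (x : ℕ → H₀), StrictMono φ → (∀ k, x k ∈ Hn (φ k)) →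
    (∃ C : ℝ, ∀ k, ‖x k‖ ≤ C) →
    ∃ (ψ : ℕ → ℕ) (z : H₀), StrictMono ψ ∧ z ∈ Hsp ∧
      Tendsto (fun k => B (φ (ψ k)) (x (ψ k))) atTop (nhds z)

/-- `S` with domain `domS` is the Hilbert-space adjoint of the densely defined operator `T`
acting in `Hsp` with domain `dom`. -/
def IsAdjointOp (Hsp dom : Submodule ℂ H₀) (T : H₀ →ₗ[ℂ] H₀)
    (domS : Submodule ℂ H₀) (S : H₀ →ₗ[ℂ] H₀) : Prop :=
  domS ≤ Hsp ∧ ∀ y ∈ Hsp, ∀ z ∈ Hsp,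
    ((y ∈ domS ∧ S y = z) ↔ ∀ x ∈ dom, (inner ℂ (T x) y : ℂ) = inner ℂ x z)

/-- The sequence of bounded operators `(Aₙ)` converges strongly. -/
def StrongConvSeq (A : ℕ → H₀ →L[ℂ] H₀) : Prop :=
  ∃ A₀ : H₀ →L[ℂ] H₀, ∀ y : H₀, Tendsto (fun n => A n y) atTop (nhds (A₀ y))

/-- `lam` belongs to the region of boundedness `Δ_b((Tₙ))`. -/
def InRegionOfBoundedness (Hn domn : ℕ → Submodule ℂ H₀) (Tn : ℕ → H₀ →ₗ[ℂ] H₀)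
    (lam : ℂ) : Prop :=
  ∃ (n₀ : ℕ) (C : ℝ) (Rn : ℕ → H₀ →L[ℂ] H₀),
    ∀ n, n ≥ n₀ → InResolvent (Hn n) (domn n) (Tn n) lam (Rn n) ∧ ‖Rn n‖ ≤ C



set_option maxHeartbeats 4000000
set_option linter.unusedSectionVars false

namespace Stmt19Aux

/-! ### A primitive cube root of unity -/

def omg : ℂ := ⟨-1/2, Real.sqrt 3 / 2⟩

lemma omg_h2 : 1 + omg + omg^2 = 0 := by
  have hs : ((Real.sqrt 3 : ℂ))^2 = 3 := by
    rw [← Complex.ofReal_pow]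
    norm_cast
    rw [Real.sq_sqrt]; norm_num
  have : omg = (-1 + (Real.sqrt 3 : ℂ) * Complex.I)/2 := by
    apply Complex.ext <;> simp [omg]
  rw [this]
  linear_combination (Complex.I^2/4) * hs + (3/4) * Complex.I_sq

lemma omg_h3 : omg^3 = 1 := by linear_combination (omg - 1) * omg_h2

lemma omg_hc : (starRingEnd ℂ) omg = omg^2 := by
  have hs : Real.sqrt 3 * Real.sqrt 3 = 3 := Real.mul_self_sqrt (by norm_num)
  apply Complex.ext <;>
    simp [omg, pow_two, Complex.mul_re, Complex.mul_im] <;> nlinarith [hs]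

lemma omg_abs : ‖omg‖ = 1 := by
  have hs : Real.sqrt 3 * Real.sqrt 3 = 3 := Real.mul_self_sqrt (by norm_num)
  have : ‖omg‖ ^ 2 = 1 := by
    rw [Complex.sq_norm, Complex.normSq_apply]; simp [omg]; nlinarith
  nlinarith [norm_nonneg omg]

/-! ### Three point averaging identity -/

lemma three_pt (ω : ℂ) (hc : (starRingEnd ℂ) ω = ω^2) (h2 : 1 + ω + ω^2 = 0) (h3 : ω^3 = 1)
    (u v w : H₀) :
    (inner ℂ (u + v + w) (u + v + w) : ℂ)
      + inner ℂ (u + ω•v + ω^2•w) (u + ω•v + ω^2•w)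
      + inner ℂ (u + ω^2•v + ω^4•w) (u + ω^2•v + ω^4•w)
      = 3 * ((inner ℂ u u : ℂ) + inner ℂ v v + inner ℂ w w) := by
  simp only [inner_add_left, inner_add_right, inner_smul_left, inner_smul_right, map_pow, hc]
  linear_combination (inner ℂ u v : ℂ) * h2
    + ((inner ℂ u w : ℂ) + inner ℂ v u) * (h2 + ω*h3)
    + ((inner ℂ v w : ℂ) + inner ℂ w u) * (h2 + ω*h3 + ω^2*(ω^3+1)*h3)
    + (inner ℂ w v : ℂ) * (h2 + ω^2*h3 + ω*(ω^6+ω^3+1)*h3)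
    + (inner ℂ v v : ℂ) * (h3 + (ω^3+1)*h3)
    + (inner ℂ w w : ℂ) * ((ω^3+1) + (ω^9+ω^6+ω^3+1))*h3

/-! ### Weak null sequences -/

lemma weaknull (A : H₀ →L[ℂ] H₀) (hA : Function.Injective A) (x : ℕ → H₀) (C : ℝ)
    (hb : ∀ n, ‖x n‖ ≤ C) (h0 : Tendsto (fun n => A (x n)) atTop (nhds 0)) :
    ∀ z : H₀, Tendsto (fun n => (inner ℂ (x n) z : ℂ)) atTop (nhds 0) := by
  intro z
  have hC0 : 0 ≤ C := le_trans (norm_nonneg _) (hb 0)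
  have hdense : (LinearMap.range ((ContinuousLinearMap.adjoint A : H₀ →L[ℂ] H₀) : H₀ →ₗ[ℂ] H₀)).topologicalClosure = ⊤ := by
    have horth : (LinearMap.range ((ContinuousLinearMap.adjoint A : H₀ →L[ℂ] H₀) : H₀ →ₗ[ℂ] H₀))ᗮ = ⊥ := by
      rw [Submodule.eq_bot_iff]
      intro v hv
      have hAv : A v = 0 := by
        have h1 : ∀ w : H₀, (inner ℂ w (A v) : ℂ) = 0 := by
          intro w
          have := hv (ContinuousLinearMap.adjoint A w) ⟨w, rfl⟩
          rwa [ContinuousLinearMap.adjoint_inner_left] at this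
        have := h1 (A v)
        rwa [inner_self_eq_zero] at this
      have : A v = A 0 := by simpa using hAv
      exact hA this
    have := (LinearMap.range ((ContinuousLinearMap.adjoint A : H₀ →L[ℂ] H₀) : H₀ →ₗ[ℂ] H₀)).orthogonal_orthogonal_eq_closure
    rw [horth] at this
    rw [← this, Submodule.bot_orthogonal_eq_top]
  rw [Metric.tendsto_atTop]
  intro ε hε
  have hz : z ∈ closure ((LinearMap.range ((ContinuousLinearMap.adjoint A : H₀ →L[ℂ] H₀) : H₀ →ₗ[ℂ] H₀) :
      Submodule ℂ H₀) : Set H₀) := by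
    have : z ∈ (LinearMap.range ((ContinuousLinearMap.adjoint A : H₀ →L[ℂ] H₀) : H₀ →ₗ[ℂ] H₀)).topologicalClosure := by
      rw [hdense]; trivial
    exact this
  obtain ⟨z', hz', hdz⟩ := Metric.mem_closure_iff.mp hz (ε / (2*(C+1))) (by positivity)
  obtain ⟨w, hw⟩ := hz'
  have h2 : Tendsto (fun n => (inner ℂ (A (x n)) w : ℂ)) atTop (nhds 0) := by
    have : Tendsto (fun n => (inner ℂ (A (x n)) w : ℂ)) atTop (nhds (inner ℂ (0:H₀) w)) :=
      Filter.Tendsto.inner h0 tendsto_const_nhds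
    simpa using this
  rw [Metric.tendsto_atTop] at h2
  obtain ⟨N, hN⟩ := h2 (ε/2) (by positivity)
  refine ⟨N, fun n hn => ?_⟩
  have key : (inner ℂ (x n) z : ℂ) = inner ℂ (x n) (z - z') + inner ℂ (A (x n)) w := by
    rw [ContinuousLinearMap.coe_coe] at hw
    rw [← ContinuousLinearMap.adjoint_inner_right A (x n) w, hw, inner_sub_right]
    ring
  rw [dist_zero_right, key]
  calc ‖(inner ℂ (x n) (z - z') : ℂ) + inner ℂ (A (x n)) w‖
      ≤ ‖(inner ℂ (x n) (z - z') : ℂ)‖ + ‖(inner ℂ (A (x n)) w : ℂ)‖ := norm_add_le _ _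
    _ < ε/2 + ε/2 := by
        apply add_lt_add_of_le_of_lt
        · calc ‖(inner ℂ (x n) (z - z') : ℂ)‖ ≤ ‖x n‖ * ‖z - z'‖ := norm_inner_le_norm _ _
            _ ≤ C * ‖z - z'‖ := by
                apply mul_le_mul_of_nonneg_right (hb n) (norm_nonneg _)
            _ ≤ C * (ε / (2*(C+1))) := by
                apply mul_le_mul_of_nonneg_left _ hC0
                rw [← dist_eq_norm]; exact le_of_lt hdz
            _ ≤ (C+1) * (ε / (2*(C+1))) := by
                apply mul_le_mul_of_nonneg_right (by linarith) (by positivity)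
            _ = ε/2 := by field_simp
        · simpa [dist_zero_right] using hN n hn
    _ = ε := by ring

/-! ### Compact operators map weakly null sequences to null sequences -/

def WCNull (C : H₀ →L[ℂ] H₀) : Prop :=
  ∀ (x : ℕ → H₀) (C' : ℝ), (∀ n, ‖x n‖ ≤ C') →
    (∀ z : H₀, Tendsto (fun n => (inner ℂ (x n) z : ℂ)) atTop (nhds 0)) →
    Tendsto (fun n => C (x n)) atTop (nhds 0)

lemma wcn_of_compact (K : H₀ →L[ℂ] H₀) (hK : IsCompactOperator (⇑K)) : WCNull K := by
  intro x C hb hw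
  apply Filter.tendsto_of_subseq_tendsto
  intro ns hns
  have hC0 : 0 ≤ C := le_trans (norm_nonneg _) (hb 0)
  have hcpt : IsCompact (closure (⇑K '' Metric.closedBall 0 C)) := by
    have : IsCompactOperator (⇑K.toLinearMap) := hK
    exact this.isCompact_closure_image_closedBall C
  have hmem : ∀ k, K (x (ns k)) ∈ closure (⇑K '' Metric.closedBall 0 C) := by
    intro k
    apply subset_closure
    exact Set.mem_image_of_mem _ (Metric.mem_closedBall.mpr (by simpa using hb (ns k)))
  obtain ⟨a, _, φ, hφ, hconv⟩ := hcpt.tendsto_subseq hmem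
  have ha : a = 0 := by
    have h1 : ∀ z : H₀, Tendsto (fun k => (inner ℂ (K (x (ns (φ k)))) z : ℂ)) atTop (nhds 0) := by
      intro z
      have h2 := hw (ContinuousLinearMap.adjoint K z)
      have h3 : Tendsto (fun k => ns (φ k)) atTop atTop :=
        hns.comp hφ.tendsto_atTop
      have h4 := h2.comp h3
      have : (fun k => (inner ℂ (K (x (ns (φ k)))) z : ℂ))
          = fun k => inner ℂ (x (ns (φ k))) (ContinuousLinearMap.adjoint K z) := by
        funext k
        rw [ContinuousLinearMap.adjoint_inner_right]
      rw [this]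
      exact h4
    have h5 : Tendsto (fun k => (inner ℂ (K (x (ns (φ k)))) a : ℂ)) atTop (nhds (inner ℂ a a)) :=
      Filter.Tendsto.inner hconv tendsto_const_nhds
    have h6 := tendsto_nhds_unique h5 (h1 a)
    rwa [inner_self_eq_zero] at h6
  exact ⟨φ, by rwa [ha] at hconv⟩

lemma wcn_adjoint (K : H₀ →L[ℂ] H₀) (hK : IsCompactOperator (⇑K)) :
    WCNull (ContinuousLinearMap.adjoint K) := by
  intro x C hb hw
  have hC0 : 0 ≤ C := le_trans (norm_nonneg _) (hb 0)
  set y : ℕ → H₀ := fun n => ContinuousLinearMap.adjoint K (x n) with hy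
  have hyb : ∀ n, ‖y n‖ ≤ ‖ContinuousLinearMap.adjoint K‖ * C := by
    intro n
    calc ‖y n‖ ≤ ‖ContinuousLinearMap.adjoint K‖ * ‖x n‖ :=
          (ContinuousLinearMap.adjoint K).le_opNorm (x n)
      _ ≤ ‖ContinuousLinearMap.adjoint K‖ * C :=
          mul_le_mul_of_nonneg_left (hb n) (norm_nonneg _)
  have hyw : ∀ z : H₀, Tendsto (fun n => (inner ℂ (y n) z : ℂ)) atTop (nhds 0) := by
    intro z
    have : (fun n => (inner ℂ (y n) z : ℂ)) = fun n => inner ℂ (x n) (K z) := by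
      funext n
      rw [hy, ContinuousLinearMap.adjoint_inner_left]
    rw [this]
    exact hw (K z)
  have hKy : Tendsto (fun n => K (y n)) atTop (nhds 0) :=
    wcn_of_compact K hK y _ hyb hyw
  rw [tendsto_zero_iff_norm_tendsto_zero]
  have hsq : ∀ n, ‖y n‖^2 ≤ C * ‖K (y n)‖ := by
    intro n
    have h1 : (inner ℂ (y n) (y n) : ℂ) = inner ℂ (x n) (K (y n)) := by
      rw [hy, ContinuousLinearMap.adjoint_inner_left]
    have h2 : ‖(inner ℂ (y n) (y n) : ℂ)‖ ≤ C * ‖K (y n)‖ := by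
      rw [h1]
      calc ‖(inner ℂ (x n) (K (y n)) : ℂ)‖ ≤ ‖x n‖ * ‖K (y n)‖ := norm_inner_le_norm _ _
        _ ≤ C * ‖K (y n)‖ := mul_le_mul_of_nonneg_right (hb n) (norm_nonneg _)
    calc ‖y n‖^2 = ‖(inner ℂ (y n) (y n) : ℂ)‖ := by
          rw [inner_self_eq_norm_sq_to_K]
          simp [norm_pow]
      _ ≤ C * ‖K (y n)‖ := h2
  have hsq0 : Tendsto (fun n => ‖y n‖^2) atTop (nhds 0) := by
    apply tendsto_of_tendsto_of_tendsto_of_le_of_le (g := fun _ => (0:ℝ))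
      (h := fun n => C * ‖K (y n)‖)
    · exact tendsto_const_nhds
    · have := (tendsto_zero_iff_norm_tendsto_zero.mp hKy).const_mul C
      simpa using this
    · intro n; positivity
    · exact hsq
  have := hsq0.sqrt
  simpa [Real.sqrt_sq (norm_nonneg _)] using this

/-! ### The maximizing sequence -/

lemma maxseq (A₀ : H₀ →L[ℂ] H₀) (M r₀ : ℝ) (hM : 0 < M) (hA : ‖A₀‖ = M) (hr₀ : 0 < r₀)
    (h : ∀ μ : ℂ, ‖μ‖ < r₀ → ∃ A' : H₀ →L[ℂ] H₀, ‖A'‖ ≤ M ∧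
      ∀ x, A' x = A₀ x + μ • A₀ (A' x)) :
    ∃ v : ℕ → H₀, (∀ n, ‖v n‖ = 1) ∧ Tendsto (fun n => ‖A₀ (v n)‖) atTop (nhds M) ∧
      Tendsto (fun n => A₀ (A₀ (v n))) atTop (nhds 0) := by
  have hbound : ∀ z : H₀, ‖A₀ z‖ ≤ M * ‖z‖ := fun z => hA ▸ A₀.le_opNorm z
  have expand : ∀ (μ : ℂ) (A' : H₀ →L[ℂ] H₀), (∀ x, A' x = A₀ x + μ • A₀ (A' x)) → ∀ y : H₀,
      A' y = A₀ y + μ • A₀ (A₀ y) + μ^2 • A₀ (A₀ (A₀ y)) + μ^3 • (A₀ (A₀ (A₀ (A' y)))) := by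
    intro μ A' hid y
    have h1 := hid y
    have h2 : A₀ (A' y) = A₀ (A₀ y) + μ • A₀ (A₀ (A' y)) := by
      conv_lhs => rw [h1]
      simp [map_add, map_smul]
    have h3 : A₀ (A₀ (A' y)) = A₀ (A₀ (A₀ y)) + μ • A₀ (A₀ (A₀ (A' y))) := by
      conv_lhs => rw [h2]
      simp [map_add, map_smul]
    conv_lhs => rw [h1, h2, h3]
    simp only [smul_add, smul_smul]
    module
  have est : ∀ r : ℝ, 0 < r → r < r₀ → ∀ y : H₀, ‖y‖ = 1 →
      ‖A₀ y‖^2 + r^2 * ‖A₀ (A₀ y)‖^2 ≤ (M + M^4 * r^3)^2 := by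
    intro r hr hrr y hy
    have habs : ∀ j : ℕ, ‖(r:ℂ) * omg^j‖ < r₀ := by
      intro j
      rw [norm_mul, norm_pow, omg_abs]
      simpa [abs_of_pos hr] using hrr
    obtain ⟨B₀, hB₀n, hB₀⟩ := h ((r:ℂ) * omg^0) (habs 0)
    obtain ⟨B₁, hB₁n, hB₁⟩ := h ((r:ℂ) * omg^1) (habs 1)
    obtain ⟨B₂, hB₂n, hB₂⟩ := h ((r:ℂ) * omg^2) (habs 2)
    set u := A₀ y with hu
    set v := (r:ℂ) • A₀ u with hv
    set w := ((r:ℂ))^2 • A₀ (A₀ u) with hw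
    have mkeq : ∀ (B : H₀ →L[ℂ] H₀) (j : ℕ), (∀ x, B x = A₀ x + ((r:ℂ)*omg^j) • A₀ (B x)) →
        u + (omg^j • v) + (omg^(2*j) • w) = B y - ((r:ℂ)*omg^j)^3 • (A₀ (A₀ (A₀ (B y)))) := by
      intro B j hB
      have hx := expand _ _ hB y
      obtain ⟨g, hg⟩ : ∃ g, A₀ (A₀ (A₀ (B y))) = g := ⟨_, rfl⟩
      rw [hg] at hx ⊢
      rw [hx]
      simp only [hu, hv, hw, smul_smul, pow_mul]
      module
    have hnorm : ∀ (B : H₀ →L[ℂ] H₀) (j : ℕ), ‖B‖ ≤ M →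
        ‖B y - ((r:ℂ)*omg^j)^3 • (A₀ (A₀ (A₀ (B y))))‖ ≤ M + M^4*r^3 := by
      intro B j hBn
      have h1 : ‖B y‖ ≤ M := by
        calc ‖B y‖ ≤ ‖B‖ * ‖y‖ := B.le_opNorm y
          _ ≤ M := by rw [hy]; simpa using hBn
      have h2 : ‖A₀ (A₀ (A₀ (B y)))‖ ≤ M^4 := by
        calc ‖A₀ (A₀ (A₀ (B y)))‖ ≤ M * ‖A₀ (A₀ (B y))‖ := hbound _
          _ ≤ M * (M * ‖A₀ (B y)‖) := by
              exact mul_le_mul_of_nonneg_left (hbound _) (le_of_lt hM)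
          _ ≤ M * (M * (M * ‖B y‖)) := by
              apply mul_le_mul_of_nonneg_left _ (le_of_lt hM)
              exact mul_le_mul_of_nonneg_left (hbound _) (le_of_lt hM)
          _ ≤ M * (M * (M * M)) := by
              apply mul_le_mul_of_nonneg_left _ (le_of_lt hM)
              apply mul_le_mul_of_nonneg_left _ (le_of_lt hM)
              exact mul_le_mul_of_nonneg_left h1 (le_of_lt hM)
          _ = M^4 := by ring
      have h3 : ‖((r:ℂ)*omg^j)^3 • (A₀ (A₀ (A₀ (B y))))‖ ≤ r^3 * M^4 := by
        rw [norm_smul]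
        have hc : ‖((r:ℂ)*omg^j)^3‖ = r^3 := by
          simp [norm_pow, norm_mul, omg_abs,
            abs_of_pos hr]
        rw [hc]
        exact mul_le_mul_of_nonneg_left h2 (by positivity)
      calc ‖B y - ((r:ℂ)*omg^j)^3 • (A₀ (A₀ (A₀ (B y))))‖
          ≤ ‖B y‖ + ‖((r:ℂ)*omg^j)^3 • (A₀ (A₀ (A₀ (B y))))‖ := norm_sub_le _ _
        _ ≤ M + r^3 * M^4 := add_le_add h1 h3
        _ = M + M^4*r^3 := by ring
    have hm0 : ‖u + v + w‖ ≤ M + M^4*r^3 := by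
      have e := mkeq B₀ 0 hB₀
      simp only [pow_zero, one_smul, Nat.mul_zero] at e
      rw [e]
      simpa using hnorm B₀ 0 hB₀n
    have hm1 : ‖u + omg•v + omg^2•w‖ ≤ M + M^4*r^3 := by
      have e := mkeq B₁ 1 hB₁
      simp only [pow_one, Nat.mul_one] at e
      rw [e]
      simpa using hnorm B₁ 1 hB₁n
    have hm2 : ‖u + omg^2•v + omg^4•w‖ ≤ M + M^4*r^3 := by
      have e := mkeq B₂ 2 hB₂
      norm_num at e
      rw [e]
      simpa using hnorm B₂ 2 hB₂n
    have key := three_pt omg omg_hc omg_h2 omg_h3 u v w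
    rw [inner_self_eq_norm_sq_to_K, inner_self_eq_norm_sq_to_K, inner_self_eq_norm_sq_to_K,
       inner_self_eq_norm_sq_to_K, inner_self_eq_norm_sq_to_K, inner_self_eq_norm_sq_to_K] at key
    have keyR : ‖u + v + w‖^2 + ‖u + omg•v + omg^2•w‖^2 + ‖u + omg^2•v + omg^4•w‖^2
        = 3 * (‖u‖^2 + ‖v‖^2 + ‖w‖^2) := by
      norm_cast at key
      apply Complex.ofReal_injective
      push_cast
      convert key using 1 <;> norm_num
    have hvn2 : ‖v‖^2 = r^2 * ‖A₀ u‖^2 := by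
      rw [hv, norm_smul]
      simp only [Complex.norm_real, Real.norm_eq_abs, abs_of_pos hr]
      ring
    have p0 := pow_le_pow_left₀ (norm_nonneg (u+v+w)) hm0 2
    have p1 := pow_le_pow_left₀ (norm_nonneg (u + omg•v + omg^2•w)) hm1 2
    have p2 := pow_le_pow_left₀ (norm_nonneg (u + omg^2•v + omg^4•w)) hm2 2
    nlinarith [sq_nonneg ‖w‖]
  -- construct the maximizing sequence
  have hsel : ∀ n : ℕ, ∃ x : H₀, ‖x‖ = 1 ∧ M * (1 - 1/(n+2)) < ‖A₀ x‖ := by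
    intro n
    have hinv1 : (0:ℝ) < 1/((n:ℝ)+2) := by positivity
    have hinv2 : 1/((n:ℝ)+2) < 1 := by
      rw [div_lt_one (by positivity)]
      have : (0:ℝ) ≤ (n:ℝ) := Nat.cast_nonneg n
      linarith
    have hlt : M * (1 - 1/(n+2)) < ‖A₀‖ := by
      rw [hA]; nlinarith
    obtain ⟨x, hx1, hx2⟩ := A₀.exists_lt_apply_of_lt_opNorm hlt
    have hxne : x ≠ 0 := by
      intro h0
      rw [h0, map_zero, norm_zero] at hx2
      nlinarith
    have hxpos : 0 < ‖x‖ := norm_pos_iff.mpr hxne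
    refine ⟨‖x‖⁻¹ • x, norm_smul_inv_norm hxne, ?_⟩
    rw [A₀.map_smul_of_tower, norm_smul]
    simp only [norm_inv, norm_norm]
    calc M * (1 - 1/(n+2)) < ‖A₀ x‖ := hx2
      _ = 1 * ‖A₀ x‖ := by ring
      _ ≤ ‖x‖⁻¹ * ‖A₀ x‖ :=
          mul_le_mul_of_nonneg_right ((one_le_inv₀ hxpos).mpr (le_of_lt hx1)) (norm_nonneg _)
  choose xx hxx1 hxx2 using hsel
  refine ⟨xx, hxx1, ?_, ?_⟩
  · -- ‖A₀ (xx n)‖ → M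
    apply tendsto_of_tendsto_of_tendsto_of_le_of_le (g := fun n : ℕ => M * (1 - 1/(n+2)))
      (h := fun _ : ℕ => M)
    · have h1 : Tendsto (fun n : ℕ => 1/((n:ℝ)+2)) atTop (nhds 0) := by
        have hb : Tendsto (fun n : ℕ => ((n:ℝ)+2)) atTop atTop :=
          tendsto_atTop_add_const_right atTop 2 tendsto_natCast_atTop_atTop
        simpa [one_div, Pi.inv_def] using hb.inv_tendsto_atTop
      have := ((tendsto_const_nhds (x := (1:ℝ))).sub h1).const_mul M
      simpa using this
    · exact tendsto_const_nhds
    · exact fun n => le_of_lt (hxx2 n)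
    · intro n
      calc ‖A₀ (xx n)‖ ≤ M * ‖xx n‖ := hbound _
        _ = M := by rw [hxx1 n]; ring
  · -- A₀ (A₀ (xx n)) → 0
    rw [tendsto_zero_iff_norm_tendsto_zero]
    rw [Metric.tendsto_atTop]
    intro c hc
    set K₁ : ℝ := 2*M^5 + M^8 with hK₁
    have hK₁pos : 0 < K₁ + 1 := by positivity
    have hK₁nn : 0 ≤ K₁ := by positivity
    set r : ℝ := min (r₀/2) (min 1 (c^2/(2*(K₁+1)))) with hrdef
    have hrc0 : r ≤ c^2/(2*(K₁+1)) := le_trans (min_le_right _ _) (min_le_right _ _)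
    have hrpos : 0 < r := by
      apply lt_min (by positivity) (lt_min one_pos (by positivity))
    have hrlt : r < r₀ := lt_of_le_of_lt (min_le_left _ _) (by linarith)
    have hr1 : r ≤ 1 := le_trans (min_le_right _ _) (min_le_left _ _)
    have hrc : r ≤ c^2/(2*(K₁+1)) := hrc0
    clear_value r
    clear hrdef
    -- choose N
    obtain ⟨N, hN⟩ := exists_nat_gt (4*M^2/(c^2*r^2))
    refine ⟨N, fun n hn => ?_⟩
    have hest := est r hrpos hrlt (xx n) (hxx1 n)
    have hlow : M * (1 - 1/(n+2)) < ‖A₀ (xx n)‖ := hxx2 n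
    have hup : ‖A₀ (xx n)‖ ≤ M := by
      calc ‖A₀ (xx n)‖ ≤ M * ‖xx n‖ := hbound _
        _ = M := by rw [hxx1 n]; ring
    have hsq : ‖A₀ (xx n)‖^2 ≥ M^2 - 2*M^2/(n+2) := by
      have h1 : (0:ℝ) < 1/((n:ℝ)+2) := by positivity
      have h2 : 1/((n:ℝ)+2) < 1 := by
        rw [div_lt_one (by positivity)]
        have : (0:ℝ) ≤ (n:ℝ) := Nat.cast_nonneg n
        linarith
      have h3 : 0 ≤ M * (1 - 1/(n+2)) := by nlinarith
      have := mul_self_le_mul_self h3 (le_of_lt hlow)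
      have heq : 2*M^2/((n:ℝ)+2) = 2*M^2 * (1/((n:ℝ)+2)) := by ring
      rw [ge_iff_le, heq]
      nlinarith [sq_nonneg (1/((n:ℝ)+2)), sq_nonneg M]
    -- (M + M^4 r^3)^2 ≤ M^2 + K₁ r^3  for r ≤ 1
    have hexp : (M + M^4*r^3)^2 ≤ M^2 + K₁*r^3 := by
      have h6 : r^6 ≤ r^3 := by
        apply pow_le_pow_of_le_one (le_of_lt hrpos) hr1
        norm_num
      have hr3 : 0 ≤ r^3 := by positivity
      rw [hK₁]
      nlinarith [sq_nonneg (M^4)]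
    have hrsq : 0 < r^2 := by positivity
    have step : r^2 * ‖A₀ (A₀ (xx n))‖^2 ≤ K₁*r^3 + 2*M^2/(n+2) := by
      clear_value K₁
      linarith [hest, hexp, hsq]
    have hnn : (4*M^2/(c^2*r^2)) < (n:ℝ) + 2 := by
      have : (N:ℝ) ≤ (n:ℝ) := Nat.cast_le.mpr hn
      linarith
    have hterm : 2*M^2/((n:ℝ)+2) < c^2*r^2/2 := by
      rw [div_lt_iff₀ (by positivity)] at hnn ⊢
      nlinarith [sq_nonneg (c*r)]
    have hterm2 : K₁ * r^3 ≤ c^2 * r^2 / 2 := by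
      have : K₁ * r ≤ c^2/2 := by
        calc K₁ * r ≤ K₁ * (c^2/(2*(K₁+1))) := by
              apply mul_le_mul_of_nonneg_left hrc (by positivity)
          _ ≤ c^2/2 := by
              rw [← mul_div_assoc, div_le_div_iff₀ (by positivity) (by norm_num)]
              nlinarith [sq_nonneg c]
      calc K₁ * r^3 = (K₁ * r) * r^2 := by ring
        _ ≤ (c^2/2) * r^2 := mul_le_mul_of_nonneg_right this (le_of_lt hrsq)
        _ = c^2 * r^2/2 := by ring
    have final : ‖A₀ (A₀ (xx n))‖^2 < c^2 := by
      have : r^2 * ‖A₀ (A₀ (xx n))‖^2 < c^2 * r^2 := by linarith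
      nlinarith [sq_nonneg ‖A₀ (A₀ (xx n))‖]
    rw [dist_zero_right, Real.norm_eq_abs, abs_of_nonneg (norm_nonneg _)]
    exact lt_of_pow_lt_pow_left₀ 2 (le_of_lt hc) final


section Resolvent

variable {dom : Submodule ℂ H₀} {T T₂ : H₀ →ₗ[ℂ] H₀} {lam lam₁ : ℂ} {R R₁ : H₀ →L[ℂ] H₀}

lemma res_mem (hR : InResolvent ⊤ dom T lam R) (y : H₀) : R y ∈ dom :=
  (hR.1 y trivial).1

lemma res_eq (hR : InResolvent ⊤ dom T lam R) (y : H₀) : T (R y) - lam • R y = y :=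
  (hR.1 y trivial).2

lemma res_inj (hR : InResolvent ⊤ dom T lam R) : Function.Injective R := by
  intro a b hab
  have h : ∀ y : H₀, R y = 0 → y = 0 := by
    intro y hy
    have := res_eq hR y
    rw [hy] at this
    simpa using this.symm
  have : R (a - b) = 0 := by rw [map_sub, hab, sub_self]
  exact sub_eq_zero.mp (h _ this)

/-- first-type identity: corrections through `B` applied to `A u` -/
lemma res_idA (K : H₀ →L[ℂ] H₀)
    (hT₂ : ∀ x ∈ dom, T₂ x = T x + K x)
    (hR₁ : InResolvent ⊤ dom T lam₁ R₁) (hR : InResolvent ⊤ dom T₂ lam R) (u : H₀) :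
    R u = R₁ u + (lam - lam₁) • R (R₁ u) - R (K (R₁ u)) := by
  have hx : R₁ u ∈ dom := res_mem hR₁ u
  have h2 := res_eq hR₁ u
  have h1 : T₂ (R₁ u) - lam • (R₁ u) = u + K (R₁ u) - (lam - lam₁) • (R₁ u) :=
    calc T₂ (R₁ u) - lam • (R₁ u)
        = (T (R₁ u) - lam₁ • R₁ u) + K (R₁ u) - (lam - lam₁) • (R₁ u) := by
          rw [hT₂ _ hx, sub_smul]; abel
      _ = u + K (R₁ u) - (lam - lam₁) • (R₁ u) := by rw [h2]
  have h3 := hR.2.1 (R₁ u) hx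
  rw [h1, map_sub, map_add, map_smul] at h3
  obtain ⟨p, hp⟩ : ∃ p, R (K (R₁ u)) = p := ⟨_, rfl⟩
  obtain ⟨q, hq⟩ : ∃ q, R (R₁ u) = q := ⟨_, rfl⟩
  rw [hp, hq] at h3 ⊢
  rw [← h3]
  abel

/-- second-type identity: corrections through `A` applied to `B u` -/
lemma res_idB (K : H₀ →L[ℂ] H₀)
    (hT₂ : ∀ x ∈ dom, T₂ x = T x + K x)
    (hR₁ : InResolvent ⊤ dom T lam₁ R₁) (hR : InResolvent ⊤ dom T₂ lam R) (u : H₀) :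
    R u = R₁ u + (lam - lam₁) • R₁ (R u) - R₁ (K (R u)) := by
  have hx : R u ∈ dom := res_mem hR u
  have h2 := res_eq hR u
  rw [hT₂ _ hx] at h2
  have h1 : T (R u) - lam₁ • (R u) = u + (lam - lam₁) • (R u) - K (R u) :=
    calc T (R u) - lam₁ • (R u)
        = (T (R u) + K (R u) - lam • R u) + (lam - lam₁) • (R u) - K (R u) := by
          rw [sub_smul]; abel
      _ = u + (lam - lam₁) • (R u) - K (R u) := by rw [h2]
  have h3 := hR₁.2.1 (R u) hx
  rw [h1, map_sub, map_add, map_smul] at h3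
  exact h3.symm

end Resolvent

/-- transport of the maximizing sequence -/
lemma transport (A B C : H₀ →L[ℂ] H₀) (δ : ℂ) (M : ℝ)
    (hid : ∀ u, B u = A u + δ • B (A u) - B (C (A u)))
    (hAinj : Function.Injective A) (hC : WCNull C)
    (v : ℕ → H₀) (hv1 : ∀ n, ‖v n‖ = 1)
    (hv2 : Tendsto (fun n => ‖A (v n)‖) atTop (nhds M))
    (hv3 : Tendsto (fun n => A (A (v n))) atTop (nhds 0)) :
    Tendsto (fun n => ‖B (v n)‖) atTop (nhds M) ∧
      Tendsto (fun n => B (B (v n))) atTop (nhds 0) := by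
  have hAb : ∀ n, ‖A (v n)‖ ≤ ‖A‖ := by
    intro n
    calc ‖A (v n)‖ ≤ ‖A‖ * ‖v n‖ := A.le_opNorm _
      _ = ‖A‖ := by rw [hv1 n, mul_one]
  have hwA := weaknull A hAinj (fun n => A (v n)) ‖A‖ hAb hv3
  have hCA : Tendsto (fun n => C (A (v n))) atTop (nhds 0) := hC _ ‖A‖ hAb hwA
  have hBcont : Tendsto (fun w : H₀ => B w) (nhds 0) (nhds 0) := by
    have := B.continuous.tendsto 0
    rwa [map_zero] at this
  have hBA : Tendsto (fun n => B (A (v n))) atTop (nhds 0) := by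
    have heq : (fun n => B (A (v n)))
        = fun n => A (A (v n)) + δ • B (A (A (v n))) - B (C (A (A (v n)))) :=
      funext fun n => hid (A (v n))
    rw [heq]
    have hCcont : Tendsto (fun w : H₀ => C w) (nhds 0) (nhds 0) := by
      have := C.continuous.tendsto 0
      rwa [map_zero] at this
    have h1 : Tendsto (fun n => B (A (A (v n)))) atTop (nhds 0) := hBcont.comp hv3
    have h2 : Tendsto (fun n => B (C (A (A (v n))))) atTop (nhds 0) :=
      hBcont.comp (hCcont.comp hv3)
    have := (hv3.add (h1.const_smul δ)).sub h2
    simpa using this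
  have hdiff : Tendsto (fun n => B (v n) - A (v n)) atTop (nhds 0) := by
    have heq : (fun n => B (v n) - A (v n))
        = fun n => δ • B (A (v n)) - B (C (A (v n))) := by
      funext n
      rw [hid (v n)]
      abel
    rw [heq]
    have h2 : Tendsto (fun n => B (C (A (v n)))) atTop (nhds 0) := hBcont.comp hCA
    have := (hBA.const_smul δ).sub h2
    simpa using this
  have hdn : Tendsto (fun n => ‖B (v n) - A (v n)‖) atTop (nhds 0) :=
    tendsto_zero_iff_norm_tendsto_zero.mp hdiff
  constructor
  · apply tendsto_of_tendsto_of_tendsto_of_le_of_le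
      (g := fun n => ‖A (v n)‖ - ‖B (v n) - A (v n)‖)
      (h := fun n => ‖A (v n)‖ + ‖B (v n) - A (v n)‖)
    · have := hv2.sub hdn; simpa using this
    · have := hv2.add hdn; simpa using this
    · intro n
      dsimp only
      have := abs_norm_sub_norm_le (B (v n)) (A (v n))
      rw [abs_le] at this
      linarith [this.1]
    · intro n
      dsimp only
      have := abs_norm_sub_norm_le (B (v n)) (A (v n))
      rw [abs_le] at this
      linarith [this.2]
  · have heq : (fun n => B (B (v n)))
        = fun n => B (A (v n)) + B (B (v n) - A (v n)) := by
      funext n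
      rw [← map_add]
      congr 1
      abel
    rw [heq]
    have h2 : Tendsto (fun n => B (B (v n) - A (v n))) atTop (nhds 0) := hBcont.comp hdiff
    have := hBA.add h2
    simpa using this

/-- building the singular sequence -/
lemma build_seq (dom' : Submodule ℂ H₀) (Top : H₀ →ₗ[ℂ] H₀) (lam' : ℂ)
    (B C : H₀ →L[ℂ] H₀) (M eps : ℝ) (heps : 0 < eps) (hM : M = 1/eps)
    (hmem : ∀ y : H₀, B y ∈ dom')
    (hact : ∀ y : H₀, Top (B y) - lam' • (B y) = y - C (B y))
    (hBinj : Function.Injective B) (hC : WCNull C)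
    (v : ℕ → H₀) (hv1 : ∀ n, ‖v n‖ = 1)
    (hv2 : Tendsto (fun n => ‖B (v n)‖) atTop (nhds M))
    (hv3 : Tendsto (fun n => B (B (v n))) atTop (nhds 0)) :
    EssNear dom' Top eps lam' := by
  have hMpos : 0 < M := by rw [hM]; positivity
  -- eventually below
  have hev : ∀ᶠ n in atTop, M/2 < ‖B (v n)‖ :=
    hv2.eventually (eventually_gt_nhds (by linarith))
  obtain ⟨N, hN⟩ := eventually_atTop.mp hev
  set u : ℕ → H₀ := fun k => v (k + N) with hu
  have hposu : ∀ k, M/2 < ‖B (u k)‖ := fun k => hN (k+N) (by omega)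
  have hne : ∀ k, B (u k) ≠ 0 := by
    intro k
    intro h0
    have := hposu k
    rw [h0, norm_zero] at this
    linarith
  set x : ℕ → H₀ := fun k => (‖B (u k)‖)⁻¹ • B (u k) with hx
  -- shifted limits
  have hv2' : Tendsto (fun k => ‖B (u k)‖) atTop (nhds M) :=
    (tendsto_add_atTop_iff_nat N).mpr hv2
  have hv3' : Tendsto (fun k => B (B (u k))) atTop (nhds 0) :=
    (tendsto_add_atTop_iff_nat N).mpr hv3
  have hinv : Tendsto (fun k => (‖B (u k)‖)⁻¹) atTop (nhds M⁻¹) :=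
    hv2'.inv₀ (ne_of_gt hMpos)
  have hxnorm : ∀ k, ‖x k‖ = 1 := fun k => norm_smul_inv_norm (hne k)
  have hxmem : ∀ k, x k ∈ dom' := fun k => Submodule.smul_of_tower_mem dom' _ (hmem (u k))
  -- B x k → 0
  have hBx : Tendsto (fun k => B (x k)) atTop (nhds 0) := by
    rw [tendsto_zero_iff_norm_tendsto_zero]
    apply tendsto_of_tendsto_of_tendsto_of_le_of_le (g := fun _ => (0:ℝ))
      (h := fun k => (2/M) * ‖B (B (u k))‖)
    · exact tendsto_const_nhds
    · have := (tendsto_zero_iff_norm_tendsto_zero.mp hv3').const_mul (2/M)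
      simpa using this
    · intro k; positivity
    · intro k
      dsimp only
      rw [B.map_smul_of_tower, norm_smul, norm_inv, norm_norm]
      apply mul_le_mul_of_nonneg_right _ (norm_nonneg _)
      calc ‖B (u k)‖⁻¹ ≤ (M/2)⁻¹ := by
            apply inv_anti₀ (by positivity) (le_of_lt (hposu k))
        _ = 2/M := by rw [inv_div]
  have hweak : WeakTendsto x 0 := by
    intro z
    have := weaknull B hBinj x 1 (fun k => le_of_eq (hxnorm k)) hBx z
    simpa using this
  refine ⟨x, hxmem, hxnorm, hweak, ?_⟩
  -- the norm limit
  have hCB : Tendsto (fun k => C (B (u k))) atTop (nhds 0) := by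
    apply hC _ ‖B‖
    · intro k
      calc ‖B (u k)‖ ≤ ‖B‖ * ‖u k‖ := B.le_opNorm _
        _ = ‖B‖ := by rw [hv1 (k+N), mul_one]
    · exact weaknull B hBinj _ ‖B‖ (fun k => by
        calc ‖B (u k)‖ ≤ ‖B‖ * ‖u k‖ := B.le_opNorm _
          _ = ‖B‖ := by rw [hv1 (k+N), mul_one]) hv3'
  have heq : ∀ k, Top (x k) - lam' • x k = (‖B (u k)‖)⁻¹ • (u k - C (B (u k))) := by
    intro k
    rw [hx]
    simp only []
    rw [Top.map_smul_of_tower, smul_comm lam' ((‖B (u k)‖)⁻¹ : ℝ) (B (u k))]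
    rw [← smul_sub, hact (u k)]
  have hnorm2 : ∀ k, ‖Top (x k) - lam' • x k‖ = (‖B (u k)‖)⁻¹ * ‖u k - C (B (u k))‖ := by
    intro k
    rw [heq k, norm_smul, norm_inv, norm_norm]
  have hn1 : Tendsto (fun k => ‖u k - C (B (u k))‖) atTop (nhds 1) := by
    apply tendsto_of_tendsto_of_tendsto_of_le_of_le
      (g := fun k => 1 - ‖C (B (u k))‖) (h := fun k => 1 + ‖C (B (u k))‖)
    · have := (tendsto_const_nhds (x := (1:ℝ))).sub (tendsto_zero_iff_norm_tendsto_zero.mp hCB)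
      simpa using this
    · have := (tendsto_const_nhds (x := (1:ℝ))).add (tendsto_zero_iff_norm_tendsto_zero.mp hCB)
      simpa using this
    · intro k
      dsimp only
      have h1 := norm_sub_norm_le (u k) (C (B (u k)))
      have h2 : ‖u k‖ = 1 := hv1 (k+N)
      linarith
    · intro k
      dsimp only
      have h1 := norm_sub_le (u k) (C (B (u k)))
      have h2 : ‖u k‖ = 1 := hv1 (k+N)
      linarith
  have : Tendsto (fun k => ‖Top (x k) - lam' • x k‖) atTop (nhds (M⁻¹ * 1)) := by
    have := hinv.mul hn1
    simpa [hnorm2] using this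
  have hMeps : M⁻¹ * 1 = eps := by rw [hM]; field_simp
  rwa [hMeps] at this



section Adj
variable {dom domS : Submodule ℂ H₀} {T S : H₀ →ₗ[ℂ] H₀} {lam : ℂ} {R R₀ K : H₀ →L[ℂ] H₀}

/-- annihilator of a dense subspace is trivial -/
lemma dense_ann (hd : dom.topologicalClosure = ⊤) (w : H₀)
    (hw : ∀ x ∈ dom, (inner ℂ x w : ℂ) = 0) : w = 0 := by
  have h514 : w ∈ closure (dom : Set H₀) := by
    have : (dom.topologicalClosure : Set H₀) = ((⊤ : Submodule ℂ H₀) : Set H₀) := by rw [hd]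
    have h2 : w ∈ (dom.topologicalClosure : Set H₀) := by rw [this]; trivial
    exact h2
  have hcl : closure (dom : Set H₀) ⊆ {x : H₀ | (inner ℂ x w : ℂ) = 0} := by
    apply closure_minimal
    · exact fun x hx => hw x hx
    · exact isClosed_eq (by continuity) continuous_const
  have : (inner ℂ w w : ℂ) = 0 := hcl h514
  rwa [inner_self_eq_zero] at this

lemma adj_inj (hd : dom.topologicalClosure = ⊤)
    (hsurj : ∀ x ∈ dom, ∃ q : H₀, R q = x) :
    Function.Injective (ContinuousLinearMap.adjoint R) := by
  have h0 : ∀ w, ContinuousLinearMap.adjoint R w = 0 → w = 0 := by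
    intro w hw
    apply dense_ann hd
    intro x hx
    obtain ⟨q, hq⟩ := hsurj x hx
    rw [← hq]
    have h1 : (inner ℂ (ContinuousLinearMap.adjoint R w) q : ℂ) = inner ℂ w (R q) :=
      ContinuousLinearMap.adjoint_inner_left R q w
    rw [hw] at h1
    simp only [inner_zero_left] at h1
    rw [← inner_conj_symm, ← h1, map_zero]
  intro a b hab
  exact sub_eq_zero.mp (h0 (a - b) (by rw [map_sub, hab, sub_self]))

lemma adjoint_res_prop (hadj : IsAdjointOp ⊤ dom T domS S)
    (hR : InResolvent ⊤ dom (T + (K : H₀ →ₗ[ℂ] H₀)) lam R) (y : H₀) :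
    (ContinuousLinearMap.adjoint R) y ∈ domS ∧
      S ((ContinuousLinearMap.adjoint R) y)
        = y - (ContinuousLinearMap.adjoint K) ((ContinuousLinearMap.adjoint R) y)
          + (starRingEnd ℂ) lam • (ContinuousLinearMap.adjoint R) y := by
  apply (hadj.2 (ContinuousLinearMap.adjoint R y) trivial _ trivial).mpr
  intro x hx
  have hRTx : R (T x) = x - R (K x) + lam • R x := by
    have h1 : T x = ((T + (K : H₀ →ₗ[ℂ] H₀)) x - lam • x) - K x + lam • x := by
      simp only [LinearMap.add_apply, ContinuousLinearMap.coe_coe]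
      abel
    rw [h1, map_add, map_sub, map_smul, hR.2.1 x hx]
  have e1 : (inner ℂ (T x) (ContinuousLinearMap.adjoint R y) : ℂ) = inner ℂ (R (T x)) y :=
    (ContinuousLinearMap.adjoint_inner_right R (T x) y)
  have e2 : (inner ℂ (R (K x)) y : ℂ)
      = inner ℂ x ((ContinuousLinearMap.adjoint K) (ContinuousLinearMap.adjoint R y)) := by
    rw [← ContinuousLinearMap.adjoint_inner_right R (K x) y,
      ContinuousLinearMap.adjoint_inner_right K x _]
  have e3 : (inner ℂ (R x) y : ℂ) = inner ℂ x (ContinuousLinearMap.adjoint R y) :=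
    (ContinuousLinearMap.adjoint_inner_right R x y).symm
  rw [e1, hRTx, inner_add_left, inner_sub_left, inner_smul_left, e2, e3,
    inner_add_right, inner_sub_right, inner_smul_right]

lemma adj_identity {δ : ℂ}
    (hp : ∀ z : H₀, R z = R₀ z + δ • R₀ (R z) - R₀ (K (R z))) (u : H₀) :
    ContinuousLinearMap.adjoint R u
      = ContinuousLinearMap.adjoint R₀ u
        + (starRingEnd ℂ) δ • ContinuousLinearMap.adjoint R (ContinuousLinearMap.adjoint R₀ u)
        - ContinuousLinearMap.adjoint R
            (ContinuousLinearMap.adjoint K (ContinuousLinearMap.adjoint R₀ u)) := by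
  apply ext_inner_right ℂ
  intro z
  rw [inner_sub_left, inner_add_left, inner_smul_left]
  rw [ContinuousLinearMap.adjoint_inner_left R z u,
    ContinuousLinearMap.adjoint_inner_left R₀ z u]
  have e1 : (inner ℂ (ContinuousLinearMap.adjoint R (ContinuousLinearMap.adjoint R₀ u)) z : ℂ)
      = inner ℂ u (R₀ (R z)) := by
    rw [ContinuousLinearMap.adjoint_inner_left R z _,
      ContinuousLinearMap.adjoint_inner_left R₀ (R z) u]
  have e2 : (inner ℂ (ContinuousLinearMap.adjoint R
      (ContinuousLinearMap.adjoint K (ContinuousLinearMap.adjoint R₀ u))) z : ℂ)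
      = inner ℂ u (R₀ (K (R z))) := by
    rw [ContinuousLinearMap.adjoint_inner_left R z _,
      ContinuousLinearMap.adjoint_inner_left K (R z) _,
      ContinuousLinearMap.adjoint_inner_left R₀ (K (R z)) u]
  rw [e1, e2]
  conv_lhs => rw [hp z]
  rw [inner_sub_right, inner_add_right, inner_smul_right]
  have : (starRingEnd ℂ) ((starRingEnd ℂ) δ) = δ := Complex.conj_conj δ
  rw [this]

lemma adj_identity2 {μ : ℂ}
    (hp : ∀ z : H₀, R z = R₀ z + (starRingEnd ℂ) μ • R (R₀ z)) (u : H₀) :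
    ContinuousLinearMap.adjoint R u
      = ContinuousLinearMap.adjoint R₀ u
        + μ • ContinuousLinearMap.adjoint R₀ (ContinuousLinearMap.adjoint R u) := by
  apply ext_inner_right ℂ
  intro z
  rw [inner_add_left, inner_smul_left]
  rw [ContinuousLinearMap.adjoint_inner_left R z u,
    ContinuousLinearMap.adjoint_inner_left R₀ z u]
  have e1 : (inner ℂ (ContinuousLinearMap.adjoint R₀ (ContinuousLinearMap.adjoint R u)) z : ℂ)
      = inner ℂ u (R (R₀ z)) := by
    rw [ContinuousLinearMap.adjoint_inner_left R₀ z _,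
      ContinuousLinearMap.adjoint_inner_left R (R₀ z) u]
  rw [e1]
  conv_lhs => rw [hp z]
  rw [inner_add_right, inner_smul_right]


end Adj

end Stmt19Aux

open Stmt19Aux in
theorem stmt19 [TopologicalSpace.SeparableSpace H₀]
    (dom : Submodule ℂ H₀) (T : H₀ →ₗ[ℂ] H₀)
    (hd : dom.topologicalClosure = ⊤) (hcl : IsClosedOp dom T)
    (domS : Submodule ℂ H₀) (S : H₀ →ₗ[ℂ] H₀)
    (hadj : IsAdjointOp ⊤ dom T domS S)
    (eps : ℝ) (heps : 0 < eps)
    (U : Set ℂ) (hUopen : IsOpen U) (hUne : U.Nonempty)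
    (hconst : ∀ lam ∈ U, ∃ R : H₀ →L[ℂ] H₀, InResolvent ⊤ dom T lam R ∧ ‖R‖ = 1 / eps) :
    (∀ lam : ℂ, InResolventSet ⊤ dom T lam →
        EssNear dom T eps lam ∧ EssNear domS S eps ((starRingEnd ℂ) lam)) ∧
      ∀ lam : ℂ, (∃ K : H₀ →L[ℂ] H₀, IsCompactOperator (⇑K) ∧
          InResolventSet ⊤ dom (T + (K : H₀ →ₗ[ℂ] H₀)) lam) →
        EssNear dom T eps lam ∧ EssNear domS S eps ((starRingEnd ℂ) lam) := by
  have hMpos : (0:ℝ) < 1/eps := by positivity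
  obtain ⟨lam₀, hU0⟩ := hUne
  obtain ⟨r₀, hr₀, hball⟩ := Metric.isOpen_iff.mp hUopen lam₀ hU0
  obtain ⟨R₀, hR₀, hR₀n⟩ := hconst lam₀ hU0
  -- primal maximizing sequence
  have hinstP : ∀ μ : ℂ, ‖μ‖ < r₀ → ∃ A' : H₀ →L[ℂ] H₀, ‖A'‖ ≤ 1/eps ∧
      ∀ x, A' x = R₀ x + μ • R₀ (A' x) := by
    intro μ hμ
    have hmem : lam₀ + μ ∈ U := by
      apply hball
      simpa [Metric.mem_ball, Complex.dist_eq, add_sub_cancel_left] using hμ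
    obtain ⟨R', hR', hR'n⟩ := hconst _ hmem
    refine ⟨R', le_of_eq hR'n, fun x => ?_⟩
    have := res_idB (0 : H₀ →L[ℂ] H₀) (fun x _ => by simp) hR₀ hR' x
    simpa [add_sub_cancel_left] using this
  obtain ⟨v, hv1, hv2, hv3⟩ := maxseq R₀ (1/eps) r₀ hMpos hR₀n hr₀ hinstP
  -- adjoint maximizing sequence
  have hA₀n : ‖ContinuousLinearMap.adjoint R₀‖ = 1/eps := by
    rw [ContinuousLinearMap.adjoint.norm_map]
    exact hR₀n
  have hinstA : ∀ μ : ℂ, ‖μ‖ < r₀ → ∃ A' : H₀ →L[ℂ] H₀, ‖A'‖ ≤ 1/eps ∧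
      ∀ x, A' x = ContinuousLinearMap.adjoint R₀ x
        + μ • ContinuousLinearMap.adjoint R₀ (A' x) := by
    intro μ hμ
    have hmem : lam₀ + (starRingEnd ℂ) μ ∈ U := by
      apply hball
      simp only [Metric.mem_ball, Complex.dist_eq, add_sub_cancel_left]
      rwa [Complex.norm_conj]
    obtain ⟨R', hR', hR'n⟩ := hconst _ hmem
    refine ⟨ContinuousLinearMap.adjoint R', ?_, ?_⟩
    · rw [ContinuousLinearMap.adjoint.norm_map]
      exact le_of_eq hR'n
    · apply adj_identity2
      intro z
      have := res_idA (0 : H₀ →L[ℂ] H₀) (fun x _ => by simp) hR₀ hR' z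
      simpa [add_sub_cancel_left] using this
  obtain ⟨w, hw1, hw2, hw3⟩ :=
    maxseq (ContinuousLinearMap.adjoint R₀) (1/eps) r₀ hMpos hA₀n hr₀ hinstA
  -- main step
  have key : ∀ (lam : ℂ) (K R' : H₀ →L[ℂ] H₀), IsCompactOperator (⇑K) →
      InResolvent ⊤ dom (T + (K : H₀ →ₗ[ℂ] H₀)) lam R' →
      EssNear dom T eps lam ∧ EssNear domS S eps ((starRingEnd ℂ) lam) := by
    intro lam K R' hK hR'
    have hT₂ : ∀ x ∈ dom, (T + (K : H₀ →ₗ[ℂ] H₀)) x = T x + K x := fun x _ => by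
      simp [LinearMap.add_apply]
    have hwcnK : WCNull K := wcn_of_compact K hK
    -- primal part
    have hidP : ∀ u, R' u = R₀ u + (lam - lam₀) • R' (R₀ u) - R' (K (R₀ u)) :=
      res_idA K hT₂ hR₀ hR'
    obtain ⟨hB2, hB3⟩ := transport R₀ R' K (lam - lam₀) (1/eps) hidP (res_inj hR₀)
      hwcnK v hv1 hv2 hv3
    have hactP : ∀ y, T (R' y) - lam • R' y = y - K (R' y) := by
      intro y
      have h2 := res_eq hR' y
      rw [hT₂ _ (res_mem hR' y)] at h2
      calc T (R' y) - lam • R' y = (T (R' y) + K (R' y) - lam • R' y) - K (R' y) := by abel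
        _ = y - K (R' y) := by rw [h2]
    have hP : EssNear dom T eps lam :=
      build_seq dom T lam R' K (1/eps) eps heps rfl (res_mem hR') hactP (res_inj hR')
        hwcnK v hv1 hB2 hB3
    -- adjoint part
    have hwcnK' : WCNull (ContinuousLinearMap.adjoint K) := wcn_adjoint K hK
    have hidA : ∀ u, ContinuousLinearMap.adjoint R' u
        = ContinuousLinearMap.adjoint R₀ u
          + (starRingEnd ℂ) (lam - lam₀) •
              ContinuousLinearMap.adjoint R' (ContinuousLinearMap.adjoint R₀ u)
          - ContinuousLinearMap.adjoint R'
              (ContinuousLinearMap.adjoint K (ContinuousLinearMap.adjoint R₀ u)) :=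
      adj_identity (fun z => res_idB K hT₂ hR₀ hR' z)
    have hA₀inj : Function.Injective (ContinuousLinearMap.adjoint R₀) :=
      adj_inj hd (fun x hx => ⟨T x - lam₀ • x, hR₀.2.1 x hx⟩)
    obtain ⟨hC2, hC3⟩ := transport (ContinuousLinearMap.adjoint R₀)
      (ContinuousLinearMap.adjoint R') (ContinuousLinearMap.adjoint K)
      ((starRingEnd ℂ) (lam - lam₀)) (1/eps) hidA hA₀inj hwcnK' w hw1 hw2 hw3
    have hmemA : ∀ y : H₀, ContinuousLinearMap.adjoint R' y ∈ domS :=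
      fun y => (adjoint_res_prop hadj hR' y).1
    have hactA : ∀ y : H₀, S (ContinuousLinearMap.adjoint R' y)
        - (starRingEnd ℂ) lam • ContinuousLinearMap.adjoint R' y
        = y - ContinuousLinearMap.adjoint K (ContinuousLinearMap.adjoint R' y) := by
      intro y
      rw [(adjoint_res_prop hadj hR' y).2]
      abel
    have hBinjA : Function.Injective (ContinuousLinearMap.adjoint R') :=
      adj_inj hd (fun x hx => ⟨(T + (K : H₀ →ₗ[ℂ] H₀)) x - lam • x, hR'.2.1 x hx⟩)
    have hA : EssNear domS S eps ((starRingEnd ℂ) lam) :=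
      build_seq domS S ((starRingEnd ℂ) lam) (ContinuousLinearMap.adjoint R')
        (ContinuousLinearMap.adjoint K) (1/eps) eps heps rfl hmemA hactA hBinjA
        hwcnK' w hw1 hC2 hC3
    exact ⟨hP, hA⟩
  constructor
  · rintro lam ⟨R', hR'⟩
    apply key lam 0 R'
    · have : ((0 : H₀ →L[ℂ] H₀) : H₀ → H₀) = (0 : H₀ → H₀) := by
        funext x; simp
      rw [this]
      exact isCompactOperator_zero
    · have hz : ((0 : H₀ →L[ℂ] H₀) : H₀ →ₗ[ℂ] H₀) = 0 := by
        ext x; simp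
      rw [hz, add_zero]
      exact hR'
  · rintro lam ⟨K, hK, R', hR'⟩
    exact key lam K R' hK hR'

end
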